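/- arXiv:1107.2734 — 7 statements merged into one kernel-verified Lean document; each statement's English description precedes it below -/
import Mathlib

section
/- Let X be an n×p real matrix and s a subset of column indices such that X(s) has full column rank. If column X_l (l ∉ s) lies in the column span of X(s), then for any λ > 0, every minimizer β of the partially penalized criterion ‖y − Xβ‖₂² + λ·Σ_{j∉s}|β_j| satisfies β_l = 0. -/
open Matrix

/-- if column `l ∉ s` of `X` lies in the span of the columns of `X(s)`
(which has full column rank), then any minimizer of the partially penalized
criterion `‖y − Xβ‖₂² + λ·∑_{j∉s}|β_j|` satisfies `β l = 0`. -/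
theorem stmt0 {n p : ℕ} (X : Matrix (Fin n) (Fin p) ℝ) (y : Fin n → ℝ)
    (s : Finset (Fin p)) (l : Fin p)
    (hrank : LinearIndependent ℝ (fun j : {x // x ∈ s} => fun i => X i j.1))
    (hl : l ∉ s)
    (hspan : (fun i => X i l) ∈
      Submodule.span ℝ (Set.range (fun j : {x // x ∈ s} => fun i => X i j.1)))
    (lam : ℝ) (hlam : 0 < lam)
    (β : Fin p → ℝ)
    (hmin : ∀ γ : Fin p → ℝ,
      (∑ i, (y i - (X *ᵥ β) i) ^ 2) + lam * ∑ j ∈ sᶜ, |β j| ≤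
      (∑ i, (y i - (X *ᵥ γ) i) ^ 2) + lam * ∑ j ∈ sᶜ, |γ j|) :
    β l = 0 := by
  by_contra hne
  rw [Submodule.mem_span_range_iff_exists_fun] at hspan
  obtain ⟨c, hc⟩ := hspan
  set c' : Fin p → ℝ := fun j => if h : j ∈ s then c ⟨j, h⟩ else 0 with hc'def
  have hc'0 : ∀ j ∉ s, c' j = 0 := by
    intro j hj; simp [hc'def, hj]
  have hc' : ∀ i, ∑ j, X i j * c' j = X i l := by
    intro i
    have h1 := congrFun hc i
    simp only [Finset.sum_apply, Pi.smul_apply, smul_eq_mul] at h1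
    have h2 : ∑ j : {x // x ∈ s}, c j * X i j.1 = ∑ j ∈ s, c' j * X i j := by
      rw [← Finset.sum_coe_sort s (fun j => c' j * X i j)]
      refine Finset.sum_congr rfl fun j _ => ?_
      simp [hc'def, j.2]
    have h3 : ∑ j ∈ s, c' j * X i j = ∑ j, c' j * X i j := by
      refine Finset.sum_subset (Finset.subset_univ s) fun j _ hj => ?_
      simp [hc'0 j hj]
    calc ∑ j, X i j * c' j = ∑ j, c' j * X i j := by
          refine Finset.sum_congr rfl fun j _ => mul_comm _ _
      _ = ∑ j ∈ s, c' j * X i j := h3.symm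
      _ = ∑ j : {x // x ∈ s}, c j * X i j.1 := h2.symm
      _ = X i l := h1
  set γ : Fin p → ℝ := fun j => β j + β l * c' j - (if j = l then β l else 0) with hγdef
  have hfit : X *ᵥ γ = X *ᵥ β := by
    funext i
    simp only [mulVec, dotProduct, hγdef]
    have : ∀ j : Fin p, X i j * (β j + β l * c' j - (if j = l then β l else 0))
        = X i j * β j + β l * (X i j * c' j) - (if j = l then X i l * β l else 0) := by
      intro j
      by_cases h : j = l <;> simp [h] <;> ring
    simp only [this, Finset.sum_sub_distrib, Finset.sum_add_distrib, ← Finset.mul_sum,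
      Finset.sum_ite_eq' Finset.univ l (fun _ => X i l * β l), Finset.mem_univ, if_true,
      hc' i]
    ring
  have hpen : ∑ j ∈ sᶜ, |γ j| = (∑ j ∈ sᶜ, |β j|) - |β l| := by
    have hlmem : l ∈ sᶜ := Finset.mem_compl.mpr hl
    rw [← Finset.add_sum_erase _ _ hlmem, ← Finset.add_sum_erase _ (fun j => |β j|) hlmem]
    have hγl : γ l = 0 := by simp [hγdef, hc'0 l hl]
    have : ∑ j ∈ sᶜ.erase l, |γ j| = ∑ j ∈ sᶜ.erase l, |β j| := by
      refine Finset.sum_congr rfl fun j hj => ?_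
      obtain ⟨hjl, hjs⟩ := Finset.mem_erase.mp hj
      have : c' j = 0 := hc'0 j (Finset.mem_compl.mp hjs)
      simp [hγdef, hjl, this]
    rw [hγl, this]; simp
  have := hmin γ
  rw [hfit, hpen] at this
  have h4 : lam * |β l| ≤ 0 := by nlinarith
  have h5 : 0 < |β l| := abs_pos.mpr hne
  nlinarith
end

section
/- Let X be an n×p real matrix, y ∈ ℝⁿ, and s a subset of column indices with X(s) of full column rank. Let H(s) = X(s)(X(s)ᵀX(s))⁻¹X(s)ᵀ be the orthogonal projection onto the column span of X(s). Then minimizing ‖y − Xβ‖₂² + λΣ_{j∉s}|β_j| over β is equivalent to minimizing ‖(I − H(s))(y − X(sᶜ)β(sᶜ))‖₂² + λΣ_{j∉s}|β_j| over β(sᶜ): the minimum values coincide, and for any minimizing β(sᶜ), the optimal β(s) is given by β̂(s) = (X(s)ᵀX(s))⁻¹X(s)ᵀ(y − X(sᶜ)β(sᶜ)). -/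
open Matrix

section Aux
variable {N M : Type*} [Fintype N] [Fintype M] [DecidableEq M]

lemma gram_isUnit (B : Matrix N M ℝ)
    (h : LinearIndependent ℝ (fun j : M => fun i => B i j)) : IsUnit (Bᵀ * B) := by
  rw [← Matrix.mulVec_injective_iff_isUnit]
  intro v w hvw
  have h0 : (Bᵀ * B) *ᵥ (v - w) = 0 := by
    rw [Matrix.mulVec_sub, hvw, sub_self]
  have hq : (v - w) ⬝ᵥ ((Bᵀ * B) *ᵥ (v - w)) = 0 := by rw [h0, dotProduct_zero]
  have hBv : B *ᵥ (v - w) = 0 := by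
    have : (B *ᵥ (v - w)) ⬝ᵥ (B *ᵥ (v - w)) = 0 := by
      rw [← hq]
      conv_rhs => rw [← Matrix.mulVec_mulVec, dotProduct_mulVec, Matrix.vecMul_transpose]
    funext i
    have := Finset.sum_eq_zero_iff_of_nonneg (fun i _ => mul_self_nonneg ((B *ᵥ (v-w)) i))
      |>.mp this i (Finset.mem_univ i)
    exact mul_self_eq_zero.mp this
  have := Fintype.linearIndependent_iff.mp h (v - w) ?_
  · funext j; have := this j; simpa [sub_eq_zero] using sub_eq_zero.mp (this)
  · funext i
    simpa [Matrix.mulVec, dotProduct, mul_comm] using congrFun hBv i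
end Aux

section Proj
variable {N M : Type*} [Fintype N] [Fintype M] [DecidableEq M] [DecidableEq N]

lemma hb_mulvec (B : Matrix N M ℝ) (hu : IsUnit (Bᵀ * B)) (r : N → ℝ) :
    B *ᵥ (((Bᵀ * B)⁻¹ * Bᵀ) *ᵥ r) = (B * (Bᵀ * B)⁻¹ * Bᵀ) *ᵥ r := by
  rw [Matrix.mulVec_mulVec, Matrix.mul_assoc]

lemma proj_eq (B : Matrix N M ℝ) (hu : IsUnit (Bᵀ * B)) (r : N → ℝ) :
    ∀ i, r i - (B *ᵥ (((Bᵀ * B)⁻¹ * Bᵀ) *ᵥ r)) i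
      = ((1 - B * (Bᵀ * B)⁻¹ * Bᵀ) *ᵥ r) i := by
  intro i
  rw [hb_mulvec B hu, Matrix.sub_mulVec, Matrix.one_mulVec]
  simp

lemma proj_le (B : Matrix N M ℝ) (hu : IsUnit (Bᵀ * B)) (r : N → ℝ) (v : M → ℝ) :
    ∑ i, (((1 - B * (Bᵀ * B)⁻¹ * Bᵀ) *ᵥ r) i) ^ 2 ≤ ∑ i, (r i - (B *ᵥ v) i) ^ 2 := by
  set Gm := Bᵀ * B with hGm
  set H := B * Gm⁻¹ * Bᵀ with hH
  have hdet : IsUnit Gm.det := (Matrix.isUnit_iff_isUnit_det _).mp hu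
  have hGi : Gm⁻¹ * Gm = 1 := Matrix.nonsing_inv_mul _ hdet
  have hHB : H * B = B := by
    rw [hH, Matrix.mul_assoc (B * Gm⁻¹), ← hGm, Matrix.mul_assoc, hGi, Matrix.mul_one]
  have hHH : H * H = H := by
    have h2 : H * H = (H * B) * Gm⁻¹ * Bᵀ := by
      rw [hH]; simp only [Matrix.mul_assoc]
    rw [h2, hHB, hH]
  have hGt : Gmᵀ = Gm := by rw [hGm, Matrix.transpose_mul, Matrix.transpose_transpose]
  have hHt : Hᵀ = H := by
    rw [hH, Matrix.transpose_mul, Matrix.transpose_mul, Matrix.transpose_transpose,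
      Matrix.transpose_nonsing_inv, hGt, Matrix.mul_assoc]
  set a := (1 - H) *ᵥ r with ha
  set w := H *ᵥ r - B *ᵥ v with hw
  have hsplit : ∀ i, r i - (B *ᵥ v) i = a i + w i := by
    intro i
    rw [ha, hw, Matrix.sub_mulVec, Matrix.one_mulVec]
    simp
  have hzero : (1 - H) *ᵥ w = 0 := by
    rw [hw, Matrix.mulVec_sub, Matrix.mulVec_mulVec, Matrix.mulVec_mulVec,
      Matrix.sub_mul, Matrix.one_mul, hHH, sub_self, Matrix.zero_mulVec,
      Matrix.sub_mul, Matrix.one_mul, hHB, sub_self, Matrix.zero_mulVec, sub_self]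
  have horth : a ⬝ᵥ w = 0 := by
    rw [ha, dotProduct_comm, dotProduct_mulVec]
    have : w ᵥ* (1 - H) = 0 := by
      have h1 : (1 - H)ᵀ = 1 - H := by
        rw [Matrix.transpose_sub, Matrix.transpose_one, hHt]
      rw [← h1, Matrix.vecMul_transpose, hzero]
    rw [this, zero_dotProduct]
  have key : ∑ i, (r i - (B *ᵥ v) i) ^ 2 = (∑ i, a i ^ 2) + ∑ i, w i ^ 2 := by
    have : ∀ i, (r i - (B *ᵥ v) i) ^ 2 = a i ^ 2 + 2 * (a i * w i) + w i ^ 2 := by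
      intro i; rw [hsplit i]; ring
    rw [Finset.sum_congr rfl (fun i _ => this i), Finset.sum_add_distrib,
      Finset.sum_add_distrib, ← Finset.mul_sum]
    have : ∑ i, a i * w i = 0 := horth
    rw [this, mul_zero, add_zero]
  rw [key]
  have : (0:ℝ) ≤ ∑ i, w i ^ 2 := Finset.sum_nonneg fun i _ => sq_nonneg _
  linarith
end Proj

/-- minimizing `‖y − Xβ‖₂² + λ∑_{j∉s}|β_j|` is equivalent to minimizing
`‖(I − H(s))(y − X(sᶜ)β(sᶜ))‖₂² + λ∑_{j∉s}|β_j|`: the minimum values coincide and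
for a minimizing `β(sᶜ)` the optimal `β(s)` is `(X(s)ᵀX(s))⁻¹X(s)ᵀ(y − X(sᶜ)β(sᶜ))`. -/
theorem stmt1 {n p : ℕ} (X : Matrix (Fin n) (Fin p) ℝ) (y : Fin n → ℝ)
    (s : Finset (Fin p)) (lam : ℝ) (hlam : 0 < lam)
    (hrank : LinearIndependent ℝ (fun j : {x // x ∈ s} => fun i => X i j.1)) :
    let Xs : Matrix (Fin n) {x // x ∈ s} ℝ := Matrix.of fun i j => X i j.1
    let H : Matrix (Fin n) (Fin n) ℝ := Xs * (Xsᵀ * Xs)⁻¹ * Xsᵀ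
    let F : (Fin p → ℝ) → ℝ := fun β =>
      (∑ i, (y i - (X *ᵥ β) i) ^ 2) + lam * ∑ j ∈ sᶜ, |β j|
    let G : (Fin p → ℝ) → ℝ := fun β =>
      (∑ i, (((1 - H) *ᵥ (y - fun i => ∑ j ∈ sᶜ, X i j * β j)) i) ^ 2)
        + lam * ∑ j ∈ sᶜ, |β j|
    sInf (Set.range F) = sInf (Set.range G) ∧
    ∀ β : Fin p → ℝ, (∀ γ, G β ≤ G γ) →
      ∀ γ, F (fun j => if h : j ∈ s then
          ((((Xsᵀ * Xs)⁻¹ * Xsᵀ) *ᵥ (y - fun i => ∑ j' ∈ sᶜ, X i j' * β j')) ⟨j, h⟩)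
        else β j) ≤ F γ := by
  intro Xs H F G
  classical
  have hu : IsUnit (Xsᵀ * Xs) := gram_isUnit Xs hrank
  set r : (Fin p → ℝ) → Fin n → ℝ :=
    fun β => y - fun i => ∑ j ∈ sᶜ, X i j * β j with hr
  set comp : (Fin p → ℝ) → Fin p → ℝ := fun β j => if h : j ∈ s then
      ((((Xsᵀ * Xs)⁻¹ * Xsᵀ) *ᵥ (r β)) ⟨j, h⟩) else β j with hcomp
  have hsplit : ∀ (β : Fin p → ℝ) i,
      y i - (X *ᵥ β) i = r β i - (Xs *ᵥ (fun j : {x // x ∈ s} => β j.1)) i := by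
    intro β i
    have h1 : (X *ᵥ β) i = ∑ j ∈ s, X i j * β j + ∑ j ∈ sᶜ, X i j * β j := by
      rw [Finset.sum_add_sum_compl]; rfl
    have h2 : (Xs *ᵥ fun j : {x // x ∈ s} => β j.1) i = ∑ j ∈ s, X i j * β j := by
      simp only [Matrix.mulVec, dotProduct]
      exact Finset.sum_coe_sort s (fun j => X i j * β j)
    simp only [hr, h1, h2, Pi.sub_apply]
    ring
  have claim1 : ∀ β, G β ≤ F β := by
    intro β
    have hp := proj_le Xs hu (r β) (fun j : {x // x ∈ s} => β j.1)
    have hF : ∑ i, (y i - (X *ᵥ β) i) ^ 2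
        = ∑ i, (r β i - (Xs *ᵥ fun j : {x // x ∈ s} => β j.1) i) ^ 2 :=
      Finset.sum_congr rfl fun i _ => by rw [hsplit β i]
    simp only [F, G]
    rw [hF]
    exact add_le_add_left hp _
  have hrcomp : ∀ β, r (comp β) = r β := by
    intro β
    funext i
    simp only [hr, Pi.sub_apply]
    congr 1
    refine Finset.sum_congr rfl fun j hj => ?_
    rw [hcomp]
    simp only [dif_neg (Finset.mem_compl.mp hj)]
  have hpencomp : ∀ β, ∑ j ∈ sᶜ, |comp β j| = ∑ j ∈ sᶜ, |β j| := by
    intro β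
    refine Finset.sum_congr rfl fun j hj => ?_
    rw [hcomp]
    simp only [dif_neg (Finset.mem_compl.mp hj)]
  have claim2 : ∀ β, F (comp β) = G β := by
    intro β
    have hs : (fun j : {x // x ∈ s} => comp β j.1)
        = ((Xsᵀ * Xs)⁻¹ * Xsᵀ) *ᵥ (r β) := by
      funext j
      rw [hcomp]
      simp only [dif_pos j.2]
    have hq : ∑ i, (y i - (X *ᵥ comp β) i) ^ 2
        = ∑ i, (((1 - Xs * (Xsᵀ * Xs)⁻¹ * Xsᵀ) *ᵥ (r β)) i) ^ 2 := by
      refine Finset.sum_congr rfl fun i _ => ?_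
      rw [hsplit (comp β) i, hrcomp β, hs, proj_eq Xs hu (r β) i]
    simp only [F, G]
    rw [hq, hpencomp β]
  have hFnonneg : ∀ β, (0:ℝ) ≤ F β := fun β =>
    add_nonneg (Finset.sum_nonneg fun i _ => sq_nonneg _)
      (mul_nonneg hlam.le (Finset.sum_nonneg fun j _ => abs_nonneg _))
  have hGnonneg : ∀ β, (0:ℝ) ≤ G β := fun β =>
    add_nonneg (Finset.sum_nonneg fun i _ => sq_nonneg _)
      (mul_nonneg hlam.le (Finset.sum_nonneg fun j _ => abs_nonneg _))
  have bddF : BddBelow (Set.range F) := ⟨0, by rintro _ ⟨β, rfl⟩; exact hFnonneg β⟩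
  have bddG : BddBelow (Set.range G) := ⟨0, by rintro _ ⟨β, rfl⟩; exact hGnonneg β⟩
  constructor
  · apply le_antisymm
    · refine le_csInf ⟨G 0, ⟨0, rfl⟩⟩ ?_
      rintro b ⟨β, rfl⟩
      exact csInf_le bddF ⟨comp β, claim2 β⟩
    · refine le_csInf ⟨F 0, ⟨0, rfl⟩⟩ ?_
      rintro b ⟨β, rfl⟩
      exact (csInf_le bddG ⟨β, rfl⟩).trans (claim1 β)
  · intro β hmin γ
    calc F (comp β) = G β := claim2 β
      _ ≤ G γ := hmin γ
      _ ≤ F γ := claim1 γ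
end

section
/- Let A be an n×m real matrix of full column rank and b ∈ ℝⁿ a vector not in the column span of A. Then the sum of the entries in the last row of the inverse of the block matrix [[AᵀA, Aᵀb],[bᵀA, bᵀb]] is positive if and only if bᵀA(AᵀA)⁻¹𝟙 < 1, where 𝟙 ∈ ℝᵐ⁺¹ picks out the row sum (equivalently, the sum equals (bᵀEb)⁻¹(1 − bᵀA(AᵀA)⁻¹𝟙_m) where E = I − A(AᵀA)⁻¹Aᵀ). -/
open Matrix

/-- the sum of the entries of the last row of the inverse of the block
matrix `[[AᵀA, Aᵀb],[bᵀA, bᵀb]]` equals `(bᵀEb)⁻¹(1 − bᵀA(AᵀA)⁻¹𝟙)` where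
`E = I − A(AᵀA)⁻¹Aᵀ`; in particular it is positive iff `bᵀA(AᵀA)⁻¹𝟙 < 1`. -/
theorem stmt4 {n m : ℕ} (A : Matrix (Fin n) (Fin m) ℝ) (b : Fin n → ℝ)
    (hrank : LinearIndependent ℝ (fun j : Fin m => fun i => A i j))
    (hb : b ∉ Submodule.span ℝ (Set.range fun j : Fin m => fun i => A i j)) :
    let M : Matrix (Fin m ⊕ Unit) (Fin m ⊕ Unit) ℝ :=
      Matrix.fromBlocks (Aᵀ * A) (Matrix.of fun i _ => (Aᵀ *ᵥ b) i)
        (Matrix.of fun _ j => (Aᵀ *ᵥ b) j) (Matrix.of fun _ _ => b ⬝ᵥ b)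
    let E : Matrix (Fin n) (Fin n) ℝ := 1 - A * (Aᵀ * A)⁻¹ * Aᵀ
    (0 < ∑ j, M⁻¹ (Sum.inr ()) j ↔ b ⬝ᵥ (A *ᵥ ((Aᵀ * A)⁻¹ *ᵥ fun _ => 1)) < 1) ∧
    ∑ j, M⁻¹ (Sum.inr ()) j =
      (b ⬝ᵥ (E *ᵥ b))⁻¹ * (1 - b ⬝ᵥ (A *ᵥ ((Aᵀ * A)⁻¹ *ᵥ fun _ => 1))) := by
  intro M E
  set P : Matrix (Fin m) (Fin m) ℝ := Aᵀ * A with hPdef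
  set q : Fin m → ℝ := Aᵀ *ᵥ b with hqdef
  -- mulVec injectivity
  have hinj : ∀ x : Fin m → ℝ, A *ᵥ x = 0 → x = 0 := by
    intro x hx
    refine funext (Fintype.linearIndependent_iff.mp hrank x ?_)
    have : (∑ j, x j • fun i => A i j) = A *ᵥ x := by
      ext i
      simp [mulVec, dotProduct, Finset.sum_apply, mul_comm]
    rw [this, hx]
  -- P is positive definite
  have hPd : P.PosDef := by
    rw [posDef_iff_dotProduct_mulVec]
    constructor
    · rw [hPdef, ← conjTranspose_eq_transpose_of_trivial]
      exact isHermitian_conjTranspose_mul_self A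
    · intro x hx
      have key : star x ⬝ᵥ (P *ᵥ x) = (A *ᵥ x) ⬝ᵥ (A *ᵥ x) := by
        rw [star_trivial, hPdef, ← mulVec_mulVec, dotProduct_mulVec, ← mulVec_transpose,
          transpose_transpose]
      rw [key]
      have h0 : A *ᵥ x ≠ 0 := fun h => hx (hinj x h)
      have hne : (A *ᵥ x) ⬝ᵥ (A *ᵥ x) ≠ 0 := fun h => h0 (dotProduct_self_eq_zero.mp h)
      have hnn : 0 ≤ (A *ᵥ x) ⬝ᵥ (A *ᵥ x) :=
        Finset.sum_nonneg fun i _ => mul_self_nonneg _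
      exact lt_of_le_of_ne hnn (Ne.symm hne)
  haveI iP : Invertible P := hPd.isUnit.invertible
  have hPs : Pᵀ = P := by rw [hPdef, transpose_mul, transpose_transpose]
  have hPis : (P⁻¹)ᵀ = P⁻¹ := by rw [transpose_nonsing_inv, hPs]
  -- value of the Schur complement
  set c : ℝ := b ⬝ᵥ (E *ᵥ b) with hcdef
  have hd : ∀ (x : Fin n → ℝ) (y : Fin m → ℝ), x ⬝ᵥ (A *ᵥ y) = (Aᵀ *ᵥ x) ⬝ᵥ y := by
    intro x y
    rw [dotProduct_mulVec, ← mulVec_transpose]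
  have hcval : c = b ⬝ᵥ b - q ⬝ᵥ (P⁻¹ *ᵥ q) := by
    have hEb : E *ᵥ b = b - A *ᵥ (P⁻¹ *ᵥ q) := by
      show (1 - A * P⁻¹ * Aᵀ) *ᵥ b = _
      rw [sub_mulVec, one_mulVec, Matrix.mul_assoc, ← mulVec_mulVec, ← mulVec_mulVec, hqdef]
    rw [hcdef, hEb, dotProduct_sub, dotProduct_mulVec b A, ← mulVec_transpose, ← hqdef]
  -- positivity of c
  have hcpos : 0 < c := by
    set u : Fin n → ℝ := b - A *ᵥ (P⁻¹ *ᵥ q) with hudef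
    have hPw : P *ᵥ (P⁻¹ *ᵥ q) = q := by
      rw [mulVec_mulVec, mul_inv_of_invertible, one_mulVec]
    have h1 : b ⬝ᵥ (A *ᵥ (P⁻¹ *ᵥ q)) = q ⬝ᵥ (P⁻¹ *ᵥ q) := by rw [hd, ← hqdef]
    have h2 : (A *ᵥ (P⁻¹ *ᵥ q)) ⬝ᵥ b = q ⬝ᵥ (P⁻¹ *ᵥ q) := by rw [dotProduct_comm, h1]
    have h3 : (A *ᵥ (P⁻¹ *ᵥ q)) ⬝ᵥ (A *ᵥ (P⁻¹ *ᵥ q)) = q ⬝ᵥ (P⁻¹ *ᵥ q) := by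
      rw [hd, mulVec_mulVec, ← hPdef, hPw]
    have hqu : c = u ⬝ᵥ u := by
      rw [hcval, hudef]
      rw [sub_dotProduct, dotProduct_sub, dotProduct_sub, h1, h2, h3]
      ring
    have hu0 : u ≠ 0 := by
      intro h0
      have hAw : b = A *ᵥ (P⁻¹ *ᵥ q) := by
        have := sub_eq_zero.mp (hudef ▸ h0)
        exact this
      have hmem : b ∈ LinearMap.range A.mulVecLin :=
        ⟨P⁻¹ *ᵥ q, by rw [mulVecLin_apply, ← hAw]⟩
      rw [Matrix.range_mulVecLin] at hmem
      exact hb hmem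
    have hne : u ⬝ᵥ u ≠ 0 := fun h => hu0 (dotProduct_self_eq_zero.mp h)
    have hnn : 0 ≤ u ⬝ᵥ u := Finset.sum_nonneg fun i _ => mul_self_nonneg _
    rw [hqu]
    exact lt_of_le_of_ne hnn (Ne.symm hne)
  have hc0 : c ≠ 0 := hcpos.ne'
  set B : Matrix (Fin m) Unit ℝ := Matrix.of fun i _ => q i with hBdef
  set C : Matrix Unit (Fin m) ℝ := Matrix.of fun _ j => q j with hCdef
  set D : Matrix Unit Unit ℝ := Matrix.of fun _ _ => b ⬝ᵥ b with hDdef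
  have hS : D - C * ⅟P * B = Matrix.of (fun _ _ => c) := by
    ext i j
    rw [invOf_eq_nonsing_inv]
    simp only [hDdef, hCdef, hBdef, Matrix.sub_apply, Matrix.mul_apply, Matrix.of_apply, hcval,
      mulVec, dotProduct, Finset.sum_mul]
    rw [Finset.sum_comm]
    congr 1
    refine Finset.sum_congr rfl fun k _ => ?_
    simp [mul_assoc, Finset.mul_sum]
  letI iS0 : Invertible (Matrix.of (fun _ _ => c) : Matrix Unit Unit ℝ) :=
    ⟨Matrix.of fun _ _ => c⁻¹,
      by ext i j; simp [Matrix.mul_apply, inv_mul_cancel₀ hc0, Matrix.one_apply],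
      by ext i j; simp [Matrix.mul_apply, mul_inv_cancel₀ hc0, Matrix.one_apply]⟩
  letI iS : Invertible (D - C * ⅟P * B) := iS0.copy _ hS
  letI iM : Invertible (fromBlocks P B C D) := fromBlocks₁₁Invertible P B C D
  have hSinv : ⅟(D - C * ⅟P * B) = Matrix.of fun _ _ => c⁻¹ :=
    invOf_eq_right_inv (by
      rw [hS]; ext i j
      simp [Matrix.mul_apply, mul_inv_cancel₀ hc0, Matrix.one_apply])
  set t : ℝ := q ⬝ᵥ (P⁻¹ *ᵥ fun _ => 1) with htdef
  have hbt : b ⬝ᵥ (A *ᵥ (P⁻¹ *ᵥ fun _ => 1)) = t := by rw [hd, ← hqdef]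
  have hsum : ∑ j, M⁻¹ (Sum.inr ()) j = c⁻¹ * (1 - t) := by
    have hM : M = fromBlocks P B C D := rfl
    rw [hM, ← invOf_eq_nonsing_inv, invOf_fromBlocks₁₁_eq, hSinv, Fintype.sum_sum_type]
    simp only [fromBlocks_apply₂₁, fromBlocks_apply₂₂, hSinv, Matrix.neg_apply,
      Matrix.mul_apply, Matrix.of_apply, hCdef, Finset.univ_unique, Finset.sum_singleton]
    rw [invOf_eq_nonsing_inv]
    have ht : t = ∑ k, ∑ x, q k * P⁻¹ k x := by
      simp [htdef, dotProduct, mulVec, Finset.mul_sum]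
    have hS2 : ∑ x : Fin m, ∑ k : Fin m, c⁻¹ * q k * P⁻¹ k x = c⁻¹ * t := by
      rw [Finset.sum_comm, ht, Finset.mul_sum]
      refine Finset.sum_congr rfl fun k _ => ?_
      simp [mul_assoc, Finset.mul_sum]
    rw [Finset.sum_neg_distrib, hS2]
    ring
  constructor
  · rw [hsum, hbt]
    have hcinv : 0 < c⁻¹ := inv_pos.mpr hcpos
    constructor
    · intro h
      nlinarith
    · intro h
      exact mul_pos hcinv (by linarith)
  · rw [hsum, hbt, hcdef]
end

section
/- Let X̃(A) be an n×ν matrix of full column rank whose Gram matrix G = X̃(A)ᵀX̃(A) satisfies G⁻¹𝟙 > 0 componentwise. Then for every j among the ν columns, the vector x̃_j satisfies x̃_jᵀ X̃(A∖{j}) (X̃(A∖{j})ᵀX̃(A∖{j}))⁻¹ 𝟙 < 1, where X̃(A∖{j}) omits column j. Conversely, if this inequality holds for all j, then G⁻¹𝟙 > 0. -/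
open Matrix

lemma gram_posDef {n : ℕ} {m : Type*} [Fintype m] [DecidableEq m]
    (X : Matrix (Fin n) m ℝ)
    (hrank : LinearIndependent ℝ fun j : m => fun i => X i j) :
    (Xᵀ * X).PosDef := by
  have h0 : ∀ x : m → ℝ, X *ᵥ x = 0 → x = 0 := by
    intro x hx
    have := Fintype.linearIndependent_iff.mp hrank x ?_
    · funext k; exact this k
    · funext i
      have := congrFun hx i
      simpa [mulVec, dotProduct, mul_comm] using this
  refine posDef_iff_dotProduct_mulVec.mpr ⟨?_, fun x hx => ?_⟩
  · have := (posSemidef_conjTranspose_mul_self X).1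
    simpa using this
  · have hq : star x ⬝ᵥ ((Xᵀ * X) *ᵥ x) = (X *ᵥ x) ⬝ᵥ (X *ᵥ x) := by
      simp only [star_trivial, ← mulVec_mulVec, dotProduct_mulVec, vecMul_transpose]
    rw [hq]
    have hXx : X *ᵥ x ≠ 0 := fun h => hx (h0 x h)
    obtain ⟨i, hi⟩ := Function.ne_iff.mp hXx
    have : (X *ᵥ x) ⬝ᵥ (X *ᵥ x) = ∑ i, ((X *ᵥ x) i)^2 := by
      simp [dotProduct, sq]
    rw [this]
    have hi2 : (X *ᵥ x) i ≠ 0 := by simpa using hi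
    refine Finset.sum_pos' (fun i _ => sq_nonneg _) ⟨i, Finset.mem_univ i, ?_⟩
    positivity
lemma posDef_diag_pos {ν : ℕ} {M : Matrix (Fin ν) (Fin ν) ℝ} (h : M.PosDef)
    (j : Fin ν) : 0 < M j j := by
  have hne : (Pi.single j 1 : Fin ν → ℝ) ≠ 0 := by
    intro h0
    have := congrFun h0 j
    simp at this
  have := h.dotProduct_mulVec_pos hne
  simpa [mulVec_single, dotProduct, Pi.single_apply] using this

lemma key {n ν : ℕ} (X : Matrix (Fin n) (Fin ν) ℝ)
    (hrank : LinearIndependent ℝ fun j : Fin ν => fun i => X i j) (j : Fin ν) :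
    (0 < (((Xᵀ * X)⁻¹ *ᵥ fun _ => (1 : ℝ)) j)) ↔
      (fun i => X i j) ⬝ᵥ
        (((Matrix.of fun i (k : {x : Fin ν // x ≠ j}) => X i k.1) *
          ((Matrix.of fun i (k : {x : Fin ν // x ≠ j}) => X i k.1)ᵀ *
            (Matrix.of fun i (k : {x : Fin ν // x ≠ j}) => X i k.1))⁻¹) *ᵥ
          fun _ => (1 : ℝ)) < 1 := by
  set Y : Matrix (Fin n) {x : Fin ν // x ≠ j} ℝ :=
    Matrix.of fun i (k : {x : Fin ν // x ≠ j}) => X i k.1 with hY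
  set G : Matrix (Fin ν) (Fin ν) ℝ := Xᵀ * X with hGdef
  set H := Yᵀ * Y with hHdef
  have hG : G.PosDef := gram_posDef X hrank
  have hH : H.PosDef := gram_posDef Y (hrank.comp Subtype.val Subtype.val_injective)
  set w : {x : Fin ν // x ≠ j} → ℝ := H⁻¹ *ᵥ fun _ => (1 : ℝ) with hw
  set S : ℝ := ∑ k : {x : Fin ν // x ≠ j}, G j k.1 * w k with hS
  -- the RHS dot product equals S
  have hdot : ((fun i => X i j) ⬝ᵥ ((Y * H⁻¹) *ᵥ fun _ => (1 : ℝ))) = S := by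
    rw [← mulVec_mulVec, dotProduct_mulVec]
    simp only [hS, dotProduct, vecMul, hGdef, mul_apply, transpose_apply, hY,
      Matrix.of_apply]
    rfl
  -- auxiliary vector u
  set u : Fin ν → ℝ := fun k => if h : k = j then 0 else w ⟨k, h⟩ with hu
  have hsplit : ∀ f : Fin ν → ℝ,
      ∑ l, f l = f j + ∑ l : {x : Fin ν // x ≠ j}, f l.1 := by
    intro f
    rw [← Finset.add_sum_erase _ f (Finset.mem_univ j),
      Finset.sum_subtype (s := Finset.univ.erase j) (p := fun x => x ≠ j)
        (fun x => by simp) f]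
  have hHinv : H *ᵥ w = fun _ => (1 : ℝ) := by
    rw [hw, mulVec_mulVec, mul_nonsing_inv _ ((Matrix.isUnit_iff_isUnit_det _).mp hH.isUnit),
      one_mulVec]
  have hGu : G *ᵥ u = (fun _ => (1 : ℝ)) - (1 - S) • (Pi.single j 1 : Fin ν → ℝ) := by
    funext k
    by_cases hk : k = j
    · subst hk
      have : (G *ᵥ u) k = ∑ l : {x : Fin ν // x ≠ k}, G k l.1 * w l := by
        rw [mulVec, dotProduct, hsplit (fun l => G k l * u l)]
        simp only [hu]
        rw [dif_pos trivial, mul_zero, zero_add]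
        exact Finset.sum_congr rfl fun x _ => by rw [dif_neg x.2]
      rw [this]
      simp [hS]
    · have h1 : (G *ᵥ u) k = ∑ l : {x : Fin ν // x ≠ j}, G k l.1 * w l := by
        rw [mulVec, dotProduct, hsplit (fun l => G k l * u l)]
        simp only [hu]
        rw [dif_pos trivial, mul_zero, zero_add]
        exact Finset.sum_congr rfl fun x _ => by rw [dif_neg x.2]
      have h2 : ∀ l : {x : Fin ν // x ≠ j}, G k l.1 = H ⟨k, hk⟩ l := by
        intro l
        simp [hGdef, hHdef, mul_apply, hY]
      have h3 : (G *ᵥ u) k = (H *ᵥ w) ⟨k, hk⟩ := by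
        rw [h1, mulVec, dotProduct]
        exact Finset.sum_congr rfl fun l _ => by rw [h2]
      rw [h3, hHinv]
      simp [Pi.single_apply, hk]
  have hGunit : IsUnit G.det := (Matrix.isUnit_iff_isUnit_det _).mp hG.isUnit
  have hsol : G⁻¹ *ᵥ (fun _ => (1 : ℝ)) =
      u + (1 - S) • (G⁻¹ *ᵥ (Pi.single j 1 : Fin ν → ℝ)) := by
    have : G *ᵥ (u + (1 - S) • (G⁻¹ *ᵥ (Pi.single j 1 : Fin ν → ℝ))) = fun _ => (1 : ℝ) := by
      rw [mulVec_add, mulVec_smul, mulVec_mulVec, mul_nonsing_inv _ hGunit, one_mulVec, hGu]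
      abel
    rw [← this, mulVec_mulVec, nonsing_inv_mul _ hGunit, one_mulVec]
  have hj : (G⁻¹ *ᵥ fun _ => (1 : ℝ)) j = (1 - S) * G⁻¹ j j := by
    rw [hsol]
    simp [hu, mulVec_single]
  have hGjj : 0 < G⁻¹ j j := posDef_diag_pos hG.inv j
  rw [hdot.symm] at *
  constructor
  · intro h
    rw [hj] at h
    nlinarith
  · intro h
    rw [hj]
    have : 0 < 1 - ((fun i => X i j) ⬝ᵥ ((Y * H⁻¹) *ᵥ fun _ => (1 : ℝ))) := by
      rw [hdot]; nlinarith [hdot ▸ h]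
    nlinarith

/-- for a full-column-rank matrix with Gram matrix `G`, one has
`G⁻¹𝟙 > 0` componentwise iff for every column `j`,
`x̃_jᵀ X̃(A∖{j}) (X̃(A∖{j})ᵀX̃(A∖{j}))⁻¹ 𝟙 < 1`. -/
theorem stmt7 {n ν : ℕ} (X : Matrix (Fin n) (Fin ν) ℝ)
    (hrank : LinearIndependent ℝ fun j : Fin ν => fun i => X i j) :
    (∀ i, 0 < (((Xᵀ * X)⁻¹ *ᵥ fun _ => (1 : ℝ)) i)) ↔
    (∀ j : Fin ν,
      (fun i => X i j) ⬝ᵥ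
        (((Matrix.of fun i (k : {x : Fin ν // x ≠ j}) => X i k.1) *
          ((Matrix.of fun i (k : {x : Fin ν // x ≠ j}) => X i k.1)ᵀ *
            (Matrix.of fun i (k : {x : Fin ν // x ≠ j}) => X i k.1))⁻¹) *ᵥ
          fun _ => (1 : ℝ)) < 1) := by
  exact forall_congr' fun j => by
    rw [← key X hrank j]
end

section
/- Let M be the n×n projection complement I − H(s), μ ∈ ℝⁿ, and for each column X_j of X define γ(j) = (1/n)X_jᵀMμ. Suppose for all j in a set s₀ᶜ, ‖X̃_jᵀX̃(s⁻)(X̃(s⁻)ᵀX̃(s⁻))⁻¹‖₁ < 1 − η for some 0 < η < 1, where X̃_j = MX_j, X̃(s⁻) = MX(s⁻), and μ lies in the span of the columns of X(s ∪ s⁻). Then max_{j ∈ s₀ᶜ} |γ(j)| ≤ (1−η) max_{j ∈ s⁻} |γ(j)|. -/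
open Matrix

/-- The projection matrix `H(t)` onto the column span of the columns of `X` in `t`. -/
noncomputable def proj {n p : ℕ} (X : Matrix (Fin n) (Fin p) ℝ) (t : Finset (Fin p)) :
    Matrix (Fin n) (Fin n) ℝ :=
  let Xt : Matrix (Fin n) {x // x ∈ t} ℝ := Matrix.of fun i k => X i k.1
  Xt * (Xtᵀ * Xt)⁻¹ * Xtᵀ

/-- `X̃(t) = (I − H(s)) X(t)`, the columns of `X` in `t` projected by `I − H(s)`. -/
noncomputable def Xtil {n p : ℕ} (X : Matrix (Fin n) (Fin p) ℝ) (s t : Finset (Fin p)) :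
    Matrix (Fin n) {x // x ∈ t} ℝ :=
  (1 - proj X s) * Matrix.of fun i k => X i k.1

/-- If the columns of `A` are linearly independent then the Gram matrix `AᵀA` is invertible. -/
lemma gram_det_isUnit {n : ℕ} {m : Type*} [Fintype m] [DecidableEq m]
    (A : Matrix (Fin n) m ℝ)
    (h : LinearIndependent ℝ fun k : m => fun i => A i k) :
    IsUnit (Aᵀ * A).det := by
  rw [isUnit_iff_ne_zero]
  intro hdet
  obtain ⟨v, hv0, hv⟩ := Matrix.exists_mulVec_eq_zero_iff.mpr hdet
  have hAv : A *ᵥ v = 0 := by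
    have h0 : v ⬝ᵥ ((Aᵀ * A) *ᵥ v) = 0 := by rw [hv, dotProduct_zero]
    rw [← Matrix.mulVec_mulVec, Matrix.dotProduct_mulVec, Matrix.vecMul_transpose,
      dotProduct_self_eq_zero] at h0
    exact h0
  apply hv0
  have hz : ∑ k, v k • (fun i => A i k) = (0 : Fin n → ℝ) := by
    funext i
    have : (A *ᵥ v) i = 0 := by rw [hAv]; rfl
    simpa [Matrix.mulVec, dotProduct, Finset.sum_apply, mul_comm] using this
  have := Fintype.linearIndependent_iff.mp h v hz
  funext k
  exact this k

lemma proj_mul_self {n : ℕ} {m : Type*} [Fintype m] [DecidableEq m]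
    (A : Matrix (Fin n) m ℝ) (hA : IsUnit (Aᵀ * A).det) :
    A * (Aᵀ * A)⁻¹ * Aᵀ * A = A := by
  calc A * (Aᵀ * A)⁻¹ * Aᵀ * A = A * ((Aᵀ * A)⁻¹ * (Aᵀ * A)) := by
        rw [Matrix.mul_assoc, Matrix.mul_assoc]
    _ = A := by rw [Matrix.nonsing_inv_mul _ hA, Matrix.mul_one]

lemma proj_fix {n : ℕ} {m : Type*} [Fintype m] [DecidableEq m]
    (A : Matrix (Fin n) m ℝ) (hA : IsUnit (Aᵀ * A).det) (c : m → ℝ) :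
    (A * (Aᵀ * A)⁻¹ * Aᵀ) *ᵥ (A *ᵥ c) = A *ᵥ c := by
  rw [Matrix.mulVec_mulVec, proj_mul_self A hA]

lemma proj_symm {n : ℕ} {m : Type*} [Fintype m] [DecidableEq m]
    (A : Matrix (Fin n) m ℝ) :
    (A * (Aᵀ * A)⁻¹ * Aᵀ)ᵀ = A * (Aᵀ * A)⁻¹ * Aᵀ := by
  rw [Matrix.transpose_mul, Matrix.transpose_mul, Matrix.transpose_transpose,
    Matrix.transpose_nonsing_inv, Matrix.transpose_mul, Matrix.transpose_transpose,
    Matrix.mul_assoc]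

/-- if `‖X̃_jᵀX̃(s⁻)(X̃(s⁻)ᵀX̃(s⁻))⁻¹‖₁ < 1 − η` for all `j ∈ s₀ᶜ` and
`μ ∈ span(X(s ∪ s⁻))`, then `max_{j∈s₀ᶜ}|γ(j)| ≤ (1−η) max_{j∈s⁻}|γ(j)|`, where
`γ(j) = (1/n)X_jᵀ(I − H(s))μ`. -/
theorem stmt8 {n p : ℕ} (hn : 0 < n) (X : Matrix (Fin n) (Fin p) ℝ)
    (s s₀ : Finset (Fin p)) (μ : Fin n → ℝ) (η : ℝ) (hη : 0 < η) (hη1 : η < 1)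
    (hne : (s₀ \ s).Nonempty)
    (hranks : LinearIndependent ℝ fun k : {x // x ∈ s} => fun i => X i k.1)
    (hrank : LinearIndependent ℝ fun k : {x // x ∈ s₀ \ s} => fun i => Xtil X s (s₀ \ s) i k)
    (hμ : μ ∈ Submodule.span ℝ
      (Set.range fun k : {x // x ∈ s ∪ (s₀ \ s)} => fun i => X i k.1))
    (hERC : ∀ j ∈ s₀ᶜ,
      ∑ k : {x // x ∈ s₀ \ s},
        |((((1 - proj X s) *ᵥ fun i => X i j) ᵥ*
            (Xtil X s (s₀ \ s) *
              ((Xtil X s (s₀ \ s))ᵀ * Xtil X s (s₀ \ s))⁻¹)) k)| < 1 - η) :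
    ∀ j ∈ s₀ᶜ,
      |(1 / (n : ℝ)) * ((fun i => X i j) ⬝ᵥ ((1 - proj X s) *ᵥ μ))| ≤
        (1 - η) * (s₀ \ s).sup' hne
          fun k => |(1 / (n : ℝ)) * ((fun i => X i k) ⬝ᵥ ((1 - proj X s) *ᵥ μ))| := by
  classical
  set t := s₀ \ s with ht
  set Xs : Matrix (Fin n) {x // x ∈ s} ℝ := Matrix.of fun i k => X i k.1 with hXsdef
  set M : Matrix (Fin n) (Fin n) ℝ := 1 - proj X s with hMdef
  have hPdef : proj X s = Xs * (Xsᵀ * Xs)⁻¹ * Xsᵀ := rfl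
  have hGs : IsUnit (Xsᵀ * Xs).det := gram_det_isUnit Xs hranks
  have hMsymm : Mᵀ = M := by
    rw [hMdef, Matrix.transpose_sub, Matrix.transpose_one, hPdef, proj_symm]
  have hMXs : M * Xs = 0 := by
    rw [hMdef, hPdef, Matrix.sub_mul, Matrix.one_mul, proj_mul_self Xs hGs, sub_self]
  have hMM : M * M = M := by
    have hMP : M * proj X s = 0 := by
      rw [hPdef]
      calc M * (Xs * (Xsᵀ * Xs)⁻¹ * Xsᵀ) = M * Xs * (Xsᵀ * Xs)⁻¹ * Xsᵀ := by
            rw [Matrix.mul_assoc M Xs, Matrix.mul_assoc M]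
        _ = 0 := by rw [hMXs, Matrix.zero_mul, Matrix.zero_mul]
    calc M * M = M * 1 - M * proj X s := by rw [hMdef, Matrix.mul_sub]
      _ = M := by rw [hMP, Matrix.mul_one, sub_zero]
  have hXtil : Xtil X s t = M * Matrix.of fun i (k : {x // x ∈ t}) => X i k.1 := rfl
  have hGt : IsUnit ((Xtil X s t)ᵀ * Xtil X s t).det := gram_det_isUnit _ hrank
  -- columns
  have hcol0 : ∀ x ∈ s, (M *ᵥ fun i => X i x) = 0 := by
    intro x hx
    funext i
    have h1 : (M * Xs) i ⟨x, hx⟩ = 0 := by rw [hMXs]; rfl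
    simpa [Matrix.mul_apply, Matrix.mulVec, dotProduct, hXsdef] using h1
  have hcolt : ∀ k : {x // x ∈ t}, (fun i => Xtil X s t i k) = M *ᵥ fun i => X i k.1 := by
    intro k
    funext i
    simp [hXtil, Matrix.mul_apply, Matrix.mulVec, dotProduct]
  -- Mμ lies in the column span of Xtil
  have hMμspan : M *ᵥ μ ∈ Submodule.span ℝ
      (Set.range fun k : {x // x ∈ t} => fun i => Xtil X s t i k) := by
    have h2 := Submodule.mem_map_of_mem (f := M.mulVecLin) hμ
    rw [Submodule.map_span] at h2
    have h3 : Submodule.span ℝ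
        (M.mulVecLin '' Set.range fun k : {x // x ∈ s ∪ t} => fun i => X i k.1) ≤
        Submodule.span ℝ (Set.range fun k : {x // x ∈ t} => fun i => Xtil X s t i k) := by
      rw [Submodule.span_le]
      rintro _ ⟨_, ⟨k, rfl⟩, rfl⟩
      by_cases hk : k.1 ∈ s
      · have h4 : M.mulVecLin (fun i => X i k.1) = 0 := by
          rw [Matrix.mulVecLin_apply]; exact hcol0 k.1 hk
        rw [h4]; exact Submodule.zero_mem _
      · have hkt : k.1 ∈ t := by
          rcases Finset.mem_union.mp k.2 with h | h
          · exact absurd h hk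
          · exact h
        apply Submodule.subset_span
        exact ⟨⟨k.1, hkt⟩, by rw [Matrix.mulVecLin_apply, ← hcolt ⟨k.1, hkt⟩]⟩
    exact h3 h2
  obtain ⟨d, hd⟩ := (Submodule.mem_span_range_iff_exists_fun ℝ).mp hMμspan
  have hMμ : M *ᵥ μ = Xtil X s t *ᵥ d := by
    funext i
    rw [← hd]
    simp [Matrix.mulVec, dotProduct, Finset.sum_apply, mul_comm]
  have hMμfix : M *ᵥ (M *ᵥ μ) = M *ᵥ μ := by rw [Matrix.mulVec_mulVec, hMM]
  have key : ∀ x : Fin p, (fun i => X i x) ⬝ᵥ (M *ᵥ μ) = (M *ᵥ fun i => X i x) ⬝ᵥ (M *ᵥ μ) := by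
    intro x
    conv_lhs => rw [← hMμfix]
    rw [Matrix.dotProduct_mulVec]
    congr 1
    rw [← Matrix.mulVec_transpose, hMsymm]
  have hfix : (Xtil X s t * ((Xtil X s t)ᵀ * Xtil X s t)⁻¹ * (Xtil X s t)ᵀ) *ᵥ (M *ᵥ μ)
      = M *ᵥ μ := by
    rw [hMμ]; exact proj_fix _ hGt d
  have expand : ∀ jj : Fin p,
      (fun i => X i jj) ⬝ᵥ (M *ᵥ μ) =
      ∑ k : {x // x ∈ t},
        ((M *ᵥ fun i => X i jj) ᵥ* (Xtil X s t * ((Xtil X s t)ᵀ * Xtil X s t)⁻¹)) k *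
          ((fun i => X i k.1) ⬝ᵥ (M *ᵥ μ)) := by
    intro jj
    calc (fun i => X i jj) ⬝ᵥ (M *ᵥ μ)
        = (M *ᵥ fun i => X i jj) ⬝ᵥ (M *ᵥ μ) := key jj
      _ = (M *ᵥ fun i => X i jj) ⬝ᵥ
            ((Xtil X s t * ((Xtil X s t)ᵀ * Xtil X s t)⁻¹ * (Xtil X s t)ᵀ) *ᵥ (M *ᵥ μ)) := by
          rw [hfix]
      _ = (M *ᵥ fun i => X i jj) ⬝ᵥ
            ((Xtil X s t * ((Xtil X s t)ᵀ * Xtil X s t)⁻¹) *ᵥ ((Xtil X s t)ᵀ *ᵥ (M *ᵥ μ))) := by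
          simp only [Matrix.mulVec_mulVec, Matrix.mul_assoc]
      _ = ((M *ᵥ fun i => X i jj) ᵥ* (Xtil X s t * ((Xtil X s t)ᵀ * Xtil X s t)⁻¹)) ⬝ᵥ
            ((Xtil X s t)ᵀ *ᵥ (M *ᵥ μ)) := by rw [Matrix.dotProduct_mulVec]
      _ = ∑ k : {x // x ∈ t},
            ((M *ᵥ fun i => X i jj) ᵥ* (Xtil X s t * ((Xtil X s t)ᵀ * Xtil X s t)⁻¹)) k *
              ((fun i => X i k.1) ⬝ᵥ (M *ᵥ μ)) := by
          simp only [dotProduct]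
          refine Finset.sum_congr rfl fun k _ => ?_
          congr 1
          have h5 : ((Xtil X s t)ᵀ *ᵥ (M *ᵥ μ)) k = (fun i => Xtil X s t i k) ⬝ᵥ (M *ᵥ μ) := by
            simp [Matrix.mulVec, dotProduct, Matrix.transpose_apply]
          rw [h5, hcolt k, ← key k.1]
          simp [dotProduct]
  -- final inequality
  intro j hj
  have hn' : (0 : ℝ) < n := by exact_mod_cast hn
  set F : Fin p → ℝ := fun k => |(1 / (n : ℝ)) * ((fun i => X i k) ⬝ᵥ (M *ᵥ μ))| with hF
  set Mx := t.sup' hne F with hMx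
  have hMx0 : 0 ≤ Mx := le_trans (abs_nonneg _) (Finset.le_sup' F hne.choose_spec)
  have habs : ∀ x : Fin p, |(fun i => X i x) ⬝ᵥ (M *ᵥ μ)| = n * F x := by
    intro x
    have hFx : F x = |1 / (n : ℝ) * ((fun i => X i x) ⬝ᵥ (M *ᵥ μ))| := rfl
    rw [hFx, abs_mul, abs_of_pos (by positivity : (0:ℝ) < 1 / (n:ℝ))]
    field_simp
  have hbound : ∀ k : {x // x ∈ t}, |(fun i => X i k.1) ⬝ᵥ (M *ᵥ μ)| ≤ n * Mx := by
    intro k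
    rw [habs k.1]
    exact mul_le_mul_of_nonneg_left (Finset.le_sup' F k.2) (le_of_lt hn')
  have hsum : |(fun i => X i j) ⬝ᵥ (M *ᵥ μ)| ≤ (1 - η) * (n * Mx) := by
    rw [expand j]
    calc |∑ k : {x // x ∈ t},
        ((M *ᵥ fun i => X i j) ᵥ* (Xtil X s t * ((Xtil X s t)ᵀ * Xtil X s t)⁻¹)) k *
          ((fun i => X i k.1) ⬝ᵥ (M *ᵥ μ))|
        ≤ ∑ k : {x // x ∈ t},
            |((M *ᵥ fun i => X i j) ᵥ* (Xtil X s t * ((Xtil X s t)ᵀ * Xtil X s t)⁻¹)) k| *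
              |(fun i => X i k.1) ⬝ᵥ (M *ᵥ μ)| := by
          refine le_trans (Finset.abs_sum_le_sum_abs _ _) ?_
          refine Finset.sum_le_sum fun k _ => ?_
          rw [abs_mul]
      _ ≤ ∑ k : {x // x ∈ t},
            |((M *ᵥ fun i => X i j) ᵥ* (Xtil X s t * ((Xtil X s t)ᵀ * Xtil X s t)⁻¹)) k| *
              (n * Mx) := by
          refine Finset.sum_le_sum fun k _ => ?_
          exact mul_le_mul_of_nonneg_left (hbound k) (abs_nonneg _)
      _ = (∑ k : {x // x ∈ t},
            |((M *ᵥ fun i => X i j) ᵥ* (Xtil X s t * ((Xtil X s t)ᵀ * Xtil X s t)⁻¹)) k|) *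
              (n * Mx) := by rw [Finset.sum_mul]
      _ ≤ (1 - η) * (n * Mx) := by
          refine mul_le_mul_of_nonneg_right (le_of_lt ?_) (by positivity)
          exact hERC j hj
  show F j ≤ (1 - η) * Mx
  have h6 : F j = (1 / (n:ℝ)) * |(fun i => X i j) ⬝ᵥ (M *ᵥ μ)| := by
    have hFj : F j = |1 / (n : ℝ) * ((fun i => X i j) ⬝ᵥ (M *ᵥ μ))| := rfl
    rw [hFj, abs_mul, abs_of_pos (by positivity : (0:ℝ) < 1 / (n:ℝ))]
  rw [h6]
  calc (1 / (n:ℝ)) * |(fun i => X i j) ⬝ᵥ (M *ᵥ μ)|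
      ≤ (1 / (n:ℝ)) * ((1 - η) * (n * Mx)) := by
        exact mul_le_mul_of_nonneg_left hsum (by positivity)
    _ = (1 - η) * Mx := by field_simp
end

section
/- Consider the compound-symmetric correlation matrix Σ = (1−ρ)I + ρ𝟙𝟙ᵀ with 0 < ρ < 1 on index set S, a subset s ⊊ s₀ ⊂ S, and β supported on s₀. With a = (1−ρ)(ρ|s|+1)/(1+(|s|−1)ρ) and b = ρ(1−ρ)/(1+(|s|−1)ρ), the quantity Γ(j, s, β) = (Σ_{jS} − Σ_{js}Σ_{ss}⁻¹Σ_{sS})β equals b·Σ_{k∈s⁻}β_k + (1−ρ)β_j for j ∈ s⁻ := s₀∖s, and equals b·Σ_{k∈s⁻}β_k for j ∈ s₀ᶜ. Consequently, max_{j∈s⁻}|Γ(j,s,β)| > max_{j∈s₀ᶜ}|Γ(j,s,β)| whenever β(s⁻) ≠ 0. -/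
open Matrix

private lemma dot_row {p : ℕ} (ρ : ℝ) (j : Fin p) (β : Fin p → ℝ) :
    (∑ k, (if j = k then (1:ℝ) else ρ) * β k) = ρ * (∑ k, β k) + (1-ρ) * β j := by
  have h : ∀ k, (if j = k then (1:ℝ) else ρ) * β k
      = ρ * β k + (if j = k then (1-ρ) * β k else 0) := by
    intro k; split_ifs <;> ring
  simp only [h, Finset.sum_add_distrib, Finset.sum_ite_eq, Finset.mem_univ, if_true,
    ← Finset.mul_sum]

private lemma cs_inv {p : ℕ} (ρ : ℝ) (hρ : 0 < ρ) (hρ1 : ρ < 1) (s : Finset (Fin p)) :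
    (Matrix.of fun i j : {x // x ∈ s} => if (i:Fin p) = (j:Fin p) then (1:ℝ) else ρ) *
      (Matrix.of fun i j : {x // x ∈ s} =>
        (if i = j then 1/(1-ρ) else 0) + -ρ/((1-ρ)*(1 + ((s.card:ℝ) - 1) * ρ))) = 1 := by
  have h1ρ : (1:ℝ) - ρ ≠ 0 := by linarith
  have hD : (0:ℝ) < 1 + ((s.card:ℝ) - 1) * ρ := by
    have : (0:ℝ) ≤ (s.card:ℝ) := Nat.cast_nonneg _
    nlinarith
  have hDne : (1:ℝ) + ((s.card:ℝ) - 1) * ρ ≠ 0 := ne_of_gt hD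
  set c : ℝ := 1/(1-ρ) with hc
  set d : ℝ := -ρ/((1-ρ)*(1 + ((s.card:ℝ) - 1) * ρ)) with hd
  ext i j
  simp only [Matrix.mul_apply, Matrix.one_apply, Matrix.of_apply]
  have hsub : ∀ k : {x // x ∈ s}, ((i:Fin p) = (k:Fin p)) = (i = k) := by
    intro k; exact (propext Subtype.ext_iff).symm
  simp only [hsub]
  have hterm : ∀ k : {x // x ∈ s},
      (if i = k then (1:ℝ) else ρ) * ((if k = j then c else 0) + d)
      = ((if k = j then ρ * c else 0) + ρ * d)
        + (if i = k then (1-ρ) * ((if k = j then c else 0) + d) else 0) := by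
    intro k; split_ifs <;> ring
  rw [Finset.sum_congr rfl fun k _ => hterm k]
  rw [Finset.sum_add_distrib, Finset.sum_add_distrib, Finset.sum_ite_eq',
    Finset.sum_ite_eq, Finset.sum_const]
  simp only [Finset.mem_univ, if_true, Finset.card_univ, Fintype.card_coe, nsmul_eq_mul]
  have hD' : (1:ℝ) + ρ * ((s.card:ℝ) - 1) ≠ 0 := by intro h0; apply hDne; linarith
  by_cases h : i = j <;> simp only [h, if_true, if_false] <;> rw [hc, hd] <;>
    field_simp <;> ring

/-- for the compound-symmetric `Σ = (1−ρ)I + ρ𝟙𝟙ᵀ`, `s ⊊ s₀`, and `β`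
supported on `s₀`, with `b = ρ(1−ρ)/(1+(|s|−1)ρ)`, the quantity
`Γ(j,s,β) = (Σ_{jS} − Σ_{js}Σ_{ss}⁻¹Σ_{sS})β` equals `b·∑_{k∈s⁻}β_k + (1−ρ)β_j` for
`j ∈ s⁻ = s₀∖s` and `b·∑_{k∈s⁻}β_k` for `j ∈ s₀ᶜ`; consequently
`max_{j∈s⁻}|Γ| > max_{j∈s₀ᶜ}|Γ|` whenever `β(s⁻) ≠ 0`. -/
theorem stmt11 {p : ℕ} (ρ : ℝ) (hρ : 0 < ρ) (hρ1 : ρ < 1)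
    (s s₀ : Finset (Fin p)) (hss : s ⊂ s₀) (β : Fin p → ℝ)
    (hsupp : ∀ j ∉ s₀, β j = 0) :
    let Sig : Matrix (Fin p) (Fin p) ℝ := Matrix.of fun i j => if i = j then 1 else ρ
    let Sss : Matrix {x // x ∈ s} {x // x ∈ s} ℝ := Matrix.of fun i j => Sig i.1 j.1
    let SsS : Matrix {x // x ∈ s} (Fin p) ℝ := Matrix.of fun i j => Sig i.1 j
    let Γ : Fin p → ℝ := fun j =>
      (fun k => Sig j k) ⬝ᵥ β - ((fun t : {x // x ∈ s} => Sig j t.1) ᵥ* (Sss⁻¹ * SsS)) ⬝ᵥ β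
    let b : ℝ := ρ * (1 - ρ) / (1 + ((s.card : ℝ) - 1) * ρ)
    (∀ j ∈ s₀ \ s, Γ j = b * (∑ k ∈ s₀ \ s, β k) + (1 - ρ) * β j) ∧
    (∀ j ∉ s₀, Γ j = b * (∑ k ∈ s₀ \ s, β k)) ∧
    ((∃ j ∈ s₀ \ s, β j ≠ 0) →
      ∀ j ∉ s₀,
        |Γ j| < (s₀ \ s).sup' (Finset.sdiff_nonempty.mpr hss.not_subset)
          fun k => |Γ k|) := by
  intro Sig Sss SsS Γ b
  have h1ρ : (1:ℝ) - ρ ≠ 0 := by linarith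
  have hD : (0:ℝ) < 1 + ((s.card:ℝ) - 1) * ρ := by
    have : (0:ℝ) ≤ (s.card:ℝ) := Nat.cast_nonneg _
    nlinarith
  have hDne : (1:ℝ) + ((s.card:ℝ) - 1) * ρ ≠ 0 := ne_of_gt hD
  set D : ℝ := 1 + ((s.card:ℝ) - 1) * ρ with hDdef
  set Minv : Matrix {x // x ∈ s} {x // x ∈ s} ℝ :=
    Matrix.of fun i j => (if i = j then 1/(1-ρ) else 0) + -ρ/((1-ρ)*D) with hMinv
  have hinv : Sss * Minv = 1 := cs_inv ρ hρ hρ1 s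
  have hSinv : Sss⁻¹ = Minv := Matrix.inv_eq_right_inv hinv
  set T : ℝ := ∑ k, β k with hTdef
  set Bs : ℝ := ∑ k ∈ s, β k with hBs
  set Bm : ℝ := ∑ k ∈ s₀ \ s, β k with hBm
  have hT : T = Bs + Bm := by
    have h1 : T = ∑ k ∈ s₀, β k := by
      rw [hTdef]
      exact (Finset.sum_subset (Finset.subset_univ s₀)
        (fun x _ hx => hsupp x hx)).symm
    have h2 : Bm + Bs = ∑ k ∈ s₀, β k := Finset.sum_sdiff hss.subset
    linarith
  -- the key formula
  have key : ∀ j ∉ s, Γ j = b * Bm + (1 - ρ) * β j := by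
    intro j hj
    have hrow : (fun t : {x // x ∈ s} => Sig j t.1) = fun _ => ρ := by
      funext t
      have : j ≠ t.1 := fun h => hj (h ▸ t.2)
      simp [Sig, this]
    have hΓ : Γ j = (fun k => Sig j k) ⬝ᵥ β
        - (((fun _ : {x // x ∈ s} => ρ) ᵥ* Minv) ᵥ* SsS) ⬝ᵥ β := by
      simp only [Γ, hSinv, ← Matrix.vecMul_vecMul, hrow]
    have hw : ((fun _ : {x // x ∈ s} => ρ) ᵥ* Minv) = fun _ => ρ / D := by
      funext k
      simp only [Matrix.vecMul, dotProduct, hMinv, Matrix.of_apply, mul_add, mul_ite,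
        mul_zero, Finset.sum_add_distrib, Finset.sum_ite_eq', Finset.mem_univ, if_true,
        Finset.sum_const, Finset.card_univ, Fintype.card_coe, nsmul_eq_mul]
      field_simp
      ring
    have hdot1 : (fun k => Sig j k) ⬝ᵥ β = ρ * T + (1-ρ) * β j := by
      simpa [dotProduct, Sig] using dot_row ρ j β
    have hdot2 : (((fun _ : {x // x ∈ s} => ρ / D) ᵥ* SsS)) ⬝ᵥ β
        = (ρ / D) * ((s.card : ℝ) * ρ * T + (1-ρ) * Bs) := by
      simp only [Matrix.vecMul, dotProduct, SsS, Matrix.of_apply]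
      rw [Finset.sum_congr rfl (fun k _ => Finset.sum_mul _ _ _), Finset.sum_comm]
      have hrow2 : ∀ t : {x // x ∈ s},
          (∑ k, ρ / D * Sig t.1 k * β k) = (ρ/D) * (ρ * T + (1-ρ) * β t.1) := by
        intro t
        rw [show (∑ k, ρ / D * Sig t.1 k * β k)
            = (ρ/D) * ∑ k, (if t.1 = k then (1:ℝ) else ρ) * β k by
          rw [Finset.mul_sum]; exact Finset.sum_congr rfl fun k _ => by
            simp [Sig, mul_assoc]]
        rw [dot_row ρ t.1 β]
      rw [Finset.sum_congr rfl fun t _ => hrow2 t, ← Finset.mul_sum]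
      have : (∑ t : {x // x ∈ s}, (ρ * T + (1-ρ) * β t.1))
          = (s.card : ℝ) * ρ * T + (1-ρ) * Bs := by
        rw [Finset.sum_add_distrib, Finset.sum_const, ← Finset.mul_sum]
        rw [hBs, ← Finset.sum_coe_sort s β]
        simp [Finset.card_univ, Fintype.card_coe]
        ring
      rw [this]
    rw [hΓ, hw, hdot1, hdot2, hT]
    show ρ * (Bs + Bm) + (1 - ρ) * β j - ρ / D * (↑s.card * ρ * (Bs + Bm) + (1 - ρ) * Bs)
        = ρ * (1 - ρ) / D * Bm + (1 - ρ) * β j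
    field_simp
    ring
  -- bullet 1
  have b1 : ∀ j ∈ s₀ \ s, Γ j = b * Bm + (1 - ρ) * β j := by
    intro j hj
    exact key j (Finset.mem_sdiff.mp hj).2
  -- bullet 2
  have b2 : ∀ j ∉ s₀, Γ j = b * Bm := by
    intro j hj
    have hjs : j ∉ s := fun h => hj (hss.subset h)
    rw [key j hjs, hsupp j hj]; ring
  refine ⟨b1, b2, ?_⟩
  rintro ⟨j₀, hj₀, hβj₀⟩ j hj
  have hb : 0 < b := by
    have : 0 < ρ * (1 - ρ) := by nlinarith
    exact div_pos this hD
  rw [b2 j hj]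
  have hne : (s₀ \ s).Nonempty := Finset.sdiff_nonempty.mpr hss.not_subset
  have hsup : ∀ k ∈ s₀ \ s, |Γ k| ≤ (s₀ \ s).sup' hne fun k => |Γ k| :=
    fun k hk => Finset.le_sup' (fun k => |Γ k|) hk
  rcases lt_trichotomy Bm 0 with hBm0 | hBm0 | hBm0
  · -- Bm < 0 : pick k with β k < 0
    have : ∃ k ∈ s₀ \ s, β k < 0 := by
      by_contra h
      push_neg at h
      have : 0 ≤ Bm := Finset.sum_nonneg h
      linarith
    obtain ⟨k, hk, hkneg⟩ := this
    refine lt_of_lt_of_le ?_ (hsup k hk)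
    rw [b1 k hk]
    have h1 : (1 - ρ) * β k < 0 := by nlinarith
    have h2 : b * Bm < 0 := mul_neg_of_pos_of_neg hb hBm0
    rw [abs_of_neg h2, abs_of_neg (by linarith : b * Bm + (1 - ρ) * β k < 0)]
    linarith
  · -- Bm = 0 : use j₀
    refine lt_of_lt_of_le ?_ (hsup j₀ hj₀)
    rw [b1 j₀ hj₀, hBm0]
    simp only [mul_zero, abs_zero, zero_add]
    have : (1 - ρ) * β j₀ ≠ 0 := mul_ne_zero h1ρ hβj₀
    exact abs_pos.mpr this
  · -- Bm > 0 : pick k with β k > 0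
    have : ∃ k ∈ s₀ \ s, 0 < β k := by
      by_contra h
      push_neg at h
      have : Bm ≤ 0 := Finset.sum_nonpos h
      linarith
    obtain ⟨k, hk, hkpos⟩ := this
    refine lt_of_lt_of_le ?_ (hsup k hk)
    rw [b1 k hk]
    have h1 : 0 < (1 - ρ) * β k := by nlinarith
    have h2 : 0 < b * Bm := mul_pos hb hBm0
    rw [abs_of_pos h2, abs_of_pos (by linarith : 0 < b * Bm + (1 - ρ) * β k)]
    linarith
end

section
/- Let X(s₀) be an n×p₀ matrix of full column rank, s ⊊ s₀ with complement s⁻ = s₀∖s, H(s) the projection onto span of X(s), μ = X(s₀)β(s₀), and Δ(s) = μᵀ(I − H(s))μ. Then: (a) Δ(s) ≤ ‖β(s⁻)‖₁ · max_{j∈s⁻}|X_jᵀ(I − H(s))μ|; and (b) Δ(s) ≥ λ_min(X(s₀)ᵀX(s₀))·‖β(s⁻)‖₂². -/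
open Matrix

lemma rayleigh_min {m : Type*} [Fintype m] [DecidableEq m] [Nonempty m]
    {G : Matrix m m ℝ} (hG : G.IsHermitian) (b : m → ℝ) :
    (⨅ i, hG.eigenvalues i) * (b ⬝ᵥ b) ≤ b ⬝ᵥ (G *ᵥ b) := by
  set U : Matrix m m ℝ := (hG.eigenvectorUnitary : Matrix m m ℝ) with hU
  have hstar : star U = Uᵀ := by ext i j; simp [conjTranspose_apply]
  have hUU : U * Uᵀ = 1 := by
    rw [← hstar]; exact mem_unitaryGroup_iff.mp hG.eigenvectorUnitary.2
  set c : m → ℝ := Uᵀ *ᵥ b with hc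
  have hcc : c ⬝ᵥ c = b ⬝ᵥ b :=
    calc c ⬝ᵥ c = (b ᵥ* U) ⬝ᵥ c := by rw [hc, mulVec_transpose]
    _ = b ⬝ᵥ (U *ᵥ c) := (dotProduct_mulVec _ _ _).symm
    _ = b ⬝ᵥ ((U * Uᵀ) *ᵥ b) := by rw [hc, mulVec_mulVec]
    _ = b ⬝ᵥ b := by rw [hUU, one_mulVec]
  have hquad : b ⬝ᵥ (G *ᵥ b) = ∑ i, hG.eigenvalues i * (c i)^2 := by
    nth_rewrite 1 [hG.spectral_theorem]
    rw [Unitary.conjStarAlgAut_apply, hstar, ← mulVec_mulVec, ← mulVec_mulVec, ← hc]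
    calc b ⬝ᵥ (U *ᵥ ((diagonal (RCLike.ofReal ∘ hG.eigenvalues)) *ᵥ c))
        = (b ᵥ* U) ⬝ᵥ ((diagonal (RCLike.ofReal ∘ hG.eigenvalues)) *ᵥ c) :=
          dotProduct_mulVec _ _ _
    _ = c ⬝ᵥ ((diagonal (RCLike.ofReal ∘ hG.eigenvalues)) *ᵥ c) := by
          rw [hc, mulVec_transpose]
    _ = ∑ i, hG.eigenvalues i * (c i)^2 := by
          simp [dotProduct, mulVec_diagonal]
          exact Finset.sum_congr rfl fun i _ => by ring
  rw [hquad, ← hcc, dotProduct, Finset.mul_sum]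
  refine Finset.sum_le_sum fun i _ => ?_
  have h1 : (⨅ i, hG.eigenvalues i) ≤ hG.eigenvalues i :=
    ciInf_le (Set.Finite.bddBelow (Set.finite_range _)) i
  calc (⨅ i, hG.eigenvalues i) * (c i * c i) ≤ hG.eigenvalues i * (c i * c i) :=
        mul_le_mul_of_nonneg_right h1 (mul_self_nonneg _)
  _ = hG.eigenvalues i * (c i)^2 := by ring

lemma mulVec_dot_expand {n p : ℕ} (N : Matrix (Fin n) (Fin p) ℝ) (w : Fin p → ℝ)
    (v : Fin n → ℝ) :
    (N *ᵥ w) ⬝ᵥ v = ∑ j, w j * ((fun i => N i j) ⬝ᵥ v) := by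
  simp only [dotProduct, mulVec, dotProduct, Finset.sum_mul, Finset.mul_sum]
  rw [Finset.sum_comm]
  exact Finset.sum_congr rfl fun j _ => Finset.sum_congr rfl fun i _ => by ring

lemma dp_mulVec_left {m n : Type*} [Fintype m] [Fintype n]
    (M : Matrix m n ℝ) (x : n → ℝ) (y : m → ℝ) :
    (M *ᵥ x) ⬝ᵥ y = x ⬝ᵥ (Mᵀ *ᵥ y) := by
  rw [dotProduct_comm, dotProduct_mulVec, mulVec_transpose, dotProduct_comm]

/-- with `μ = X(s₀)β(s₀)` and `Δ(s) = μᵀ(I − H(s))μ`: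
(a) `Δ(s) ≤ ‖β(s⁻)‖₁ · max_{j∈s⁻}|X_jᵀ(I − H(s))μ|`;
(b) `Δ(s) ≥ λ_min(X(s₀)ᵀX(s₀))·‖β(s⁻)‖₂²`. -/
theorem stmt15 {n p : ℕ} (X : Matrix (Fin n) (Fin p) ℝ) (s s₀ : Finset (Fin p))
    (hss : s ⊂ s₀)
    (hrank : LinearIndependent ℝ fun k : {x // x ∈ s₀} => fun i => X i k.1)
    (hranks : LinearIndependent ℝ fun k : {x // x ∈ s} => fun i => X i k.1)
    (β : Fin p → ℝ) (hsupp : ∀ j ∉ s₀, β j = 0) :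
    let μ : Fin n → ℝ := X *ᵥ β
    let Δ : ℝ := μ ⬝ᵥ ((1 - proj X s) *ᵥ μ)
    let Xs₀ : Matrix (Fin n) {x // x ∈ s₀} ℝ := Matrix.of fun i k => X i k.1
    (Δ ≤ (∑ j ∈ s₀ \ s, |β j|) *
        (s₀ \ s).sup' (Finset.sdiff_nonempty.mpr hss.not_subset)
          fun j => |(fun i => X i j) ⬝ᵥ ((1 - proj X s) *ᵥ μ)|) ∧
    (∃ hG : (Xs₀ᵀ * Xs₀).IsHermitian,
      (⨅ i, hG.eigenvalues i) * ∑ j ∈ s₀ \ s, (β j) ^ 2 ≤ Δ) := by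
  intro μ Δ Xs₀
  classical
  set Xs : Matrix (Fin n) {x // x ∈ s} ℝ := Matrix.of fun i k => X i k.1 with hXsdef
  set A : Matrix {x // x ∈ s} {x // x ∈ s} ℝ := Xsᵀ * Xs with hAdef
  -- the Gram matrix of the columns in s is invertible
  have hinj : Function.Injective Xs.mulVec := mulVec_injective_iff.mpr hranks
  have hAsym : Aᵀ = A := by rw [hAdef, transpose_mul, transpose_transpose]
  have hApd : A.PosDef := by
    refine posDef_iff_dotProduct_mulVec.mpr ⟨?_, fun x hx => ?_⟩
    · have h : Aᵀ = Aᴴ := by ext i j; simp [conjTranspose_apply]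
      rw [IsHermitian, ← h, hAsym]
    · have hXx : Xs *ᵥ x ≠ 0 := by
        intro h0
        exact hx (hinj (by simpa [mulVec_zero] using h0))
      have heq : star x ⬝ᵥ (A *ᵥ x) = (Xs *ᵥ x) ⬝ᵥ (Xs *ᵥ x) := by
        rw [star_trivial, hAdef, ← mulVec_mulVec, ← dp_mulVec_left]
      rw [heq]
      exact lt_of_le_of_ne (Finset.sum_nonneg fun i _ => mul_self_nonneg _)
        (Ne.symm (mt dotProduct_self_eq_zero.mp hXx))
  have hAdet : IsUnit A.det := (Matrix.isUnit_iff_isUnit_det A).mp hApd.isUnit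
  have hAinv : A⁻¹ * A = 1 := Matrix.nonsing_inv_mul A hAdet
  have hAinv' : A * A⁻¹ = 1 := Matrix.mul_nonsing_inv A hAdet
  have hAinvT : (A⁻¹)ᵀ = A⁻¹ := by rw [Matrix.transpose_nonsing_inv, hAsym]
  have hH : proj X s = Xs * A⁻¹ * Xsᵀ := rfl
  have hHsym : (proj X s)ᵀ = proj X s := by
    rw [hH, transpose_mul, transpose_mul, transpose_transpose, hAinvT, Matrix.mul_assoc]
  have hHX : proj X s * Xs = Xs := by
    rw [hH, Matrix.mul_assoc (Xs * A⁻¹), ← hAdef, Matrix.mul_assoc, hAinv, Matrix.mul_one]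
  have hHH : proj X s * proj X s = proj X s := by
    rw [hH, ← Matrix.mul_assoc, ← Matrix.mul_assoc, ← hH, hHX]
    exact hH.symm
  have hHXcol : ∀ j (hj : j ∈ s), proj X s *ᵥ (fun i => X i j) = fun i => X i j := by
    intro j hj
    have he : (fun i => X i j) = Xs *ᵥ Pi.single ⟨j, hj⟩ 1 := by
      ext i; simp [hXsdef]
    rw [he, mulVec_mulVec, hHX]
  -- columns indexed by s are annihilated
  have hdot : ∀ j ∈ s, (fun i => X i j) ⬝ᵥ ((1 - proj X s) *ᵥ μ) = 0 := by
    intro j hj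
    rw [dotProduct_mulVec, ← mulVec_transpose, transpose_sub, transpose_one, hHsym,
      sub_mulVec, one_mulVec, hHXcol j hj, sub_self, zero_dotProduct]
  -- expansion of Δ as a sum over columns
  have hexp : Δ = ∑ j : Fin p, β j * ((fun i => X i j) ⬝ᵥ ((1 - proj X s) *ᵥ μ)) := by
    show (X *ᵥ β) ⬝ᵥ ((1 - proj X s) *ᵥ (X *ᵥ β)) = _
    exact mulVec_dot_expand X β _
  have hexp2 : Δ = ∑ j ∈ s₀ \ s, β j * ((fun i => X i j) ⬝ᵥ ((1 - proj X s) *ᵥ μ)) := by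
    rw [hexp, ← Finset.sum_subset (Finset.subset_univ (s₀ \ s))]
    intro j _ hj
    rcases Finset.mem_sdiff.not.mp hj |> not_and_or.mp with hj0 | hjs
    · rw [hsupp j hj0, zero_mul]
    · rw [hdot j (not_not.mp hjs), mul_zero]
  constructor
  · -- part (a)
    set M := (s₀ \ s).sup' (Finset.sdiff_nonempty.mpr hss.not_subset)
      fun j => |(fun i => X i j) ⬝ᵥ ((1 - proj X s) *ᵥ μ)| with hM
    rw [hexp2, Finset.sum_mul]
    refine Finset.sum_le_sum fun j hj => ?_
    calc β j * ((fun i => X i j) ⬝ᵥ ((1 - proj X s) *ᵥ μ))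
        ≤ |β j * ((fun i => X i j) ⬝ᵥ ((1 - proj X s) *ᵥ μ))| := le_abs_self _
    _ = |β j| * |(fun i => X i j) ⬝ᵥ ((1 - proj X s) *ᵥ μ)| := abs_mul _ _
    _ ≤ |β j| * M := by
        refine mul_le_mul_of_nonneg_left ?_ (abs_nonneg _)
        exact Finset.le_sup' (fun j => |(fun i => X i j) ⬝ᵥ ((1 - proj X s) *ᵥ μ)|) hj
  · -- part (b)
    obtain ⟨j0, hj0⟩ := Finset.sdiff_nonempty.mpr hss.not_subset
    haveI : Nonempty {x // x ∈ s₀} := ⟨⟨j0, (Finset.mem_sdiff.mp hj0).1⟩⟩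
    have hPSD : (Xs₀ᵀ * Xs₀).PosSemidef := by
      have h : Xs₀ᵀ = Xs₀ᴴ := by ext i j; simp [conjTranspose_apply]
      rw [h]; exact posSemidef_conjTranspose_mul_self Xs₀
    refine ⟨hPSD.1, ?_⟩
    -- the coefficient vector of the residual
    set c : {x // x ∈ s} → ℝ := (A⁻¹ * Xsᵀ) *ᵥ μ with hc
    set g : Fin p → ℝ := fun j => β j - if h : j ∈ s then c ⟨j, h⟩ else 0 with hg
    set b : {x // x ∈ s₀} → ℝ := fun k => g k.1 with hb
    have hHmu : proj X s *ᵥ μ = Xs *ᵥ c := by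
      conv_rhs => rw [hc, mulVec_mulVec]
      rw [← Matrix.mul_assoc, ← hH]
    have hXb : Xs₀ *ᵥ b = (1 - proj X s) *ᵥ μ := by
      rw [sub_mulVec, one_mulVec, hHmu]
      ext i
      have h1 : (Xs₀ *ᵥ b) i = ∑ j ∈ s₀, X i j * g j := by
        show ∑ k : {x // x ∈ s₀}, X i k.1 * g k.1 = _
        exact Finset.sum_coe_sort s₀ (fun j => X i j * g j)
      have h2 : (Xs *ᵥ c) i = ∑ j ∈ s, X i j * (if h : j ∈ s then c ⟨j, h⟩ else 0) := by
        show ∑ k : {x // x ∈ s}, X i k.1 * c k = _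
        rw [← Finset.sum_coe_sort s (fun j => X i j * (if h : j ∈ s then c ⟨j, h⟩ else 0))]
        exact Finset.sum_congr rfl fun k _ => by rw [dif_pos k.2]
      have h3 : μ i = ∑ j ∈ s₀, X i j * β j := by
        show ∑ j : Fin p, X i j * β j = _
        rw [← Finset.sum_subset (Finset.subset_univ s₀)]
        intro j _ hj; rw [hsupp j hj, mul_zero]
      rw [h1, Pi.sub_apply, h3, h2]
      simp only [hg, mul_sub]
      rw [Finset.sum_sub_distrib]
      congr 1
      exact (Finset.sum_subset hss.subset fun j _ hj => by rw [dif_neg hj, mul_zero]).symm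
    -- Δ equals the squared norm of the residual
    have hΔv : Δ = ((1 - proj X s) *ᵥ μ) ⬝ᵥ ((1 - proj X s) *ᵥ μ) := by
      rw [dp_mulVec_left, mulVec_mulVec]
      have : (1 - proj X s)ᵀ * (1 - proj X s) = 1 - proj X s := by
        rw [transpose_sub, transpose_one, hHsym, Matrix.sub_mul, Matrix.one_mul,
          Matrix.mul_sub, Matrix.mul_one, hHH]
        abel
      rw [this]
    have hquad : Δ = b ⬝ᵥ ((Xs₀ᵀ * Xs₀) *ᵥ b) := by
      rw [hΔv, ← hXb, dp_mulVec_left, mulVec_mulVec]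
    have hb2 : ∑ j ∈ s₀ \ s, (β j) ^ 2 ≤ b ⬝ᵥ b := by
      have h1 : b ⬝ᵥ b = ∑ j ∈ s₀, g j * g j := by
        show ∑ k : {x // x ∈ s₀}, g k.1 * g k.1 = _
        exact Finset.sum_coe_sort s₀ (fun j => g j * g j)
      have h2 : ∀ j ∈ s₀ \ s, (β j) ^ 2 = g j * g j := by
        intro j hj
        rw [hg]
        simp only [dif_neg (Finset.mem_sdiff.mp hj).2, sub_zero]
        ring
      rw [h1, Finset.sum_congr rfl h2]
      exact Finset.sum_le_sum_of_subset_of_nonneg (Finset.sdiff_subset)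
        fun j _ _ => mul_self_nonneg _
    have hlam0 : 0 ≤ ⨅ i, hPSD.1.eigenvalues i :=
      le_ciInf fun i => hPSD.eigenvalues_nonneg i
    calc (⨅ i, hPSD.1.eigenvalues i) * ∑ j ∈ s₀ \ s, (β j) ^ 2
        ≤ (⨅ i, hPSD.1.eigenvalues i) * (b ⬝ᵥ b) :=
          mul_le_mul_of_nonneg_left hb2 hlam0
      _ ≤ b ⬝ᵥ ((Xs₀ᵀ * Xs₀) *ᵥ b) := rayleigh_min hPSD.1 b
      _ = Δ := hquad.symm
end
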